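/- arXiv:2502.06363 — 3 statements merged into one kernel-verified Lean document; each statement's English description precedes it below -/
import Mathlib

section
/- Fix T ∈ ℕ+, real numbers λ̄ ≥ 0 and λ̃ > 0 with λ̄ ≤ λ̃, and a nonempty subset 𝒳̃ ⊆ 𝒳. Let x_{T,1},…,x_{T,T} ∈ 𝒳̃ be chosen by maximum variance reduction with noise level λ̄²: for every t ∈ [T] and every x ∈ 𝒳̃, σ_{λ̄²I_{t−1}}(x; X_{T,t−1}) ≤ σ_{λ̄²I_{t−1}}(x_{T,t}; X_{T,t−1}), where X_{T,t−1} := (x_{T,1},…,x_{T,t−1}); assume K(X_{T,t},X_{T,t}) + λ̄²I_t is invertible for every t ≤ T. Suppose γ ≥ 0 satisfies I_{λ̃²I_T}(Z) ≤ γ for every T-tuple Z of points of 𝒳, and that T/2 ≥ 3γ. Then for every x ∈ 𝒳̃, σ_{λ̄²I_T}(x; X_{T,T}) ≤ (4/T)·√(λ̃²·T·γ). -/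
open Matrix Real Finset

noncomputable section

universe u

/-- Gram (kernel) matrix of a finite tuple of points. -/
def gramMat {𝒳 : Type u} (k : 𝒳 → 𝒳 → ℝ) {m : ℕ} (X : Fin m → 𝒳) :
    Matrix (Fin m) (Fin m) ℝ :=
  Matrix.of fun i j => k (X i) (X j)

/-- Kernel vector `k(x, X)`. -/
def kVec {𝒳 : Type u} (k : 𝒳 → 𝒳 → ℝ) {m : ℕ} (X : Fin m → 𝒳) (x : 𝒳) : Fin m → ℝ :=
  fun i => k x (X i)

/-- Posterior variance `σ²_Σ(x; X)`. -/
def postVar {𝒳 : Type u} (k : 𝒳 → 𝒳 → ℝ) {m : ℕ} (S : Matrix (Fin m) (Fin m) ℝ)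
    (X : Fin m → 𝒳) (x : 𝒳) : ℝ :=
  k x x - kVec k X x ⬝ᵥ ((gramMat k X + S)⁻¹ *ᵥ kVec k X x)

/-- Posterior standard deviation `σ_Σ(x; X)`. -/
def postStd {𝒳 : Type u} (k : 𝒳 → 𝒳 → ℝ) {m : ℕ} (S : Matrix (Fin m) (Fin m) ℝ)
    (X : Fin m → 𝒳) (x : 𝒳) : ℝ :=
  Real.sqrt (postVar k S X x)

/-- Posterior mean `μ_Σ(x; X, y)`. -/
def postMean {𝒳 : Type u} (k : 𝒳 → 𝒳 → ℝ) {m : ℕ} (S : Matrix (Fin m) (Fin m) ℝ)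
    (X : Fin m → 𝒳) (y : Fin m → ℝ) (x : 𝒳) : ℝ :=
  kVec k X x ⬝ᵥ ((gramMat k X + S)⁻¹ *ᵥ y)

/-- Information gain `I_Σ(Z)`. -/
def infoGain {𝒳 : Type u} (k : 𝒳 → 𝒳 → ℝ) {m : ℕ} (S : Matrix (Fin m) (Fin m) ℝ)
    (Z : Fin m → 𝒳) : ℝ :=
  (1 / 2) * Real.log ((S + gramMat k Z).det / S.det)

/-- `k` is a symmetric positive semidefinite kernel. -/
def IsKernel {𝒳 : Type u} (k : 𝒳 → 𝒳 → ℝ) : Prop :=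
  (∀ x y, k x y = k y x) ∧ ∀ (m : ℕ) (Z : Fin m → 𝒳), (gramMat k Z).PosSemidef

/-- Prefix of length `t` of a sequence of points. -/
def preT {𝒳 : Type u} (x : ℕ → 𝒳) (t : ℕ) : Fin t → 𝒳 := fun i => x i.val


def extV {t T : ℕ} (_ht : t ≤ T) (w : Fin t → ℝ) : Fin T → ℝ :=
  fun i => if h : i.val < t then w ⟨i.val, h⟩ else 0

lemma sum_extV {t T : ℕ} (ht : t ≤ T) (w : Fin t → ℝ) (g : Fin T → ℝ) :
    ∑ i : Fin T, extV ht w i * g i = ∑ j : Fin t, w j * g (Fin.castLE ht j) := by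
  rw [← Finset.sum_subset (Finset.subset_univ ((Finset.univ : Finset (Fin t)).map (Fin.castLEEmb ht)))]
  · rw [Finset.sum_map]
    refine Finset.sum_congr rfl fun j _ => ?_
    have : ((Fin.castLEEmb ht) j).val = j.val := rfl
    simp [extV, Fin.castLEEmb, this, Fin.is_lt]
  · intro i _ hi
    have : ¬ i.val < t := by
      intro h
      exact hi (Finset.mem_map.mpr ⟨⟨i.val, h⟩, Finset.mem_univ _, by ext; simp⟩)
    simp [extV, this]

lemma dot_symm {n : ℕ} {M : Matrix (Fin n) (Fin n) ℝ} (hs : M.IsSymm)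
    (a b : Fin n → ℝ) : a ⬝ᵥ (M *ᵥ b) = b ⬝ᵥ (M *ᵥ a) := by
  rw [Matrix.dotProduct_mulVec, ← Matrix.mulVec_transpose, hs.eq, dotProduct_comm]

lemma key_ineq {n : ℕ} {M : Matrix (Fin n) (Fin n) ℝ} (hs : M.IsSymm)
    (hdet : M.det ≠ 0) (hpsd : ∀ v : Fin n → ℝ, 0 ≤ v ⬝ᵥ (M *ᵥ v))
    (z y : Fin n → ℝ) :
    2 * (y ⬝ᵥ z) - y ⬝ᵥ (M *ᵥ y) ≤ z ⬝ᵥ (M⁻¹ *ᵥ z) := by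
  have hu : IsUnit M.det := isUnit_iff_ne_zero.mpr hdet
  have hMz : M *ᵥ (M⁻¹ *ᵥ z) = z := by
    rw [Matrix.mulVec_mulVec, Matrix.mul_nonsing_inv _ hu, Matrix.one_mulVec]
  have h := hpsd (M⁻¹ *ᵥ z - y)
  have hexp : (M⁻¹ *ᵥ z - y) ⬝ᵥ (M *ᵥ (M⁻¹ *ᵥ z - y))
      = z ⬝ᵥ (M⁻¹ *ᵥ z) - 2 * (y ⬝ᵥ z) + y ⬝ᵥ (M *ᵥ y) := by
    rw [Matrix.mulVec_sub, sub_dotProduct, dotProduct_sub,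
      dotProduct_sub, hMz]
    have h1 : (M⁻¹ *ᵥ z) ⬝ᵥ z = z ⬝ᵥ (M⁻¹ *ᵥ z) := dotProduct_comm _ _
    have h2 : y ⬝ᵥ z = z ⬝ᵥ y := dotProduct_comm _ _
    have h3 : (M⁻¹ *ᵥ z) ⬝ᵥ (M *ᵥ y) = y ⬝ᵥ (M *ᵥ (M⁻¹ *ᵥ z)) := dot_symm hs _ _
    rw [h1, h3, hMz, h2]
    ring
  rw [hexp] at h
  linarith

lemma restrict_qf {t T : ℕ} (ht : t ≤ T) {M : Matrix (Fin T) (Fin T) ℝ}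
    (hs : M.IsSymm) (hdet : M.det ≠ 0) (hpsd : ∀ v : Fin T → ℝ, 0 ≤ v ⬝ᵥ (M *ᵥ v))
    (A : Matrix (Fin t) (Fin t) ℝ)
    (hA : ∀ i j, A i j = M (Fin.castLE ht i) (Fin.castLE ht j))
    (hdetA : A.det ≠ 0)
    (z : Fin T → ℝ) (u : Fin t → ℝ) (hu : ∀ j, u j = z (Fin.castLE ht j)) :
    u ⬝ᵥ (A⁻¹ *ᵥ u) ≤ z ⬝ᵥ (M⁻¹ *ᵥ z) := by
  set w : Fin t → ℝ := A⁻¹ *ᵥ u with hw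
  set y : Fin T → ℝ := extV ht w with hy
  have hAw : A *ᵥ w = u := by
    rw [hw, Matrix.mulVec_mulVec, Matrix.mul_nonsing_inv _ (isUnit_iff_ne_zero.mpr hdetA),
      Matrix.one_mulVec]
  have h1 : y ⬝ᵥ z = w ⬝ᵥ u := by
    rw [hy]
    show ∑ i, extV ht w i * z i = _
    rw [sum_extV]
    exact Finset.sum_congr rfl fun j _ => by rw [hu j]
  have h2 : y ⬝ᵥ (M *ᵥ y) = w ⬝ᵥ u := by
    have hMy : ∀ j : Fin t, (M *ᵥ y) (Fin.castLE ht j) = (A *ᵥ w) j := by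
      intro j
      show ∑ i, M (Fin.castLE ht j) i * y i = ∑ i, A j i * w i
      have : ∑ i, M (Fin.castLE ht j) i * y i = ∑ i, extV ht w i * M (Fin.castLE ht j) i := by
        exact Finset.sum_congr rfl fun i _ => mul_comm _ _
      rw [this, sum_extV]
      exact Finset.sum_congr rfl fun i _ => by rw [hA j i, mul_comm]
    show ∑ i, extV ht w i * (M *ᵥ y) i = _
    rw [sum_extV]
    rw [show w ⬝ᵥ u = ∑ j, w j * u j from rfl]
    refine Finset.sum_congr rfl fun j _ => ?_
    rw [hMy j, hAw]
  have hk := key_ineq hs hdet hpsd z y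
  rw [h1, h2] at hk
  have : u ⬝ᵥ (A⁻¹ *ᵥ u) = w ⬝ᵥ u := dotProduct_comm _ _
  rw [this]
  linarith

lemma inv_anti {n : ℕ} {M N : Matrix (Fin n) (Fin n) ℝ}
    (hsM : M.IsSymm) (hdetM : M.det ≠ 0) (hpsdM : ∀ v : Fin n → ℝ, 0 ≤ v ⬝ᵥ (M *ᵥ v))
    (hsN : N.IsSymm) (hdetN : N.det ≠ 0)
    (hMN : ∀ v : Fin n → ℝ, v ⬝ᵥ (M *ᵥ v) ≤ v ⬝ᵥ (N *ᵥ v))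
    (z : Fin n → ℝ) : z ⬝ᵥ (N⁻¹ *ᵥ z) ≤ z ⬝ᵥ (M⁻¹ *ᵥ z) := by
  have hu : IsUnit N.det := isUnit_iff_ne_zero.mpr hdetN
  have hNz : N *ᵥ (N⁻¹ *ᵥ z) = z := by
    rw [Matrix.mulVec_mulVec, Matrix.mul_nonsing_inv _ hu, Matrix.one_mulVec]
  have h1 := key_ineq hsM hdetM hpsdM z (N⁻¹ *ᵥ z)
  have h2 := hMN (N⁻¹ *ᵥ z)
  have h3 : (N⁻¹ *ᵥ z) ⬝ᵥ (N *ᵥ (N⁻¹ *ᵥ z)) = z ⬝ᵥ (N⁻¹ *ᵥ z) := by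
    rw [hNz, dotProduct_comm]
  have h4 : (N⁻¹ *ᵥ z) ⬝ᵥ z = z ⬝ᵥ (N⁻¹ *ᵥ z) := dotProduct_comm _ _
  nlinarith [h1, h2]

section Helpers
variable {𝒳 : Type u} {k : 𝒳 → 𝒳 → ℝ}

lemma smul_one_qf {n : ℕ} (c : ℝ) (v : Fin n → ℝ) :
    v ⬝ᵥ ((c • (1 : Matrix (Fin n) (Fin n) ℝ)) *ᵥ v) = c * (v ⬝ᵥ v) := by
  rw [Matrix.smul_mulVec, Matrix.one_mulVec, dotProduct_smul, smul_eq_mul]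

lemma Mmat_isSymm (hk : IsKernel k) {m : ℕ} (X : Fin m → 𝒳) (c : ℝ) :
    (gramMat k X + c • (1 : Matrix (Fin m) (Fin m) ℝ)).IsSymm := by
  have h1 : (gramMat k X).IsSymm := by
    ext i j
    simp [gramMat, Matrix.transpose_apply, hk.1 (X j) (X i)]
  exact h1.add ((Matrix.isSymm_one).smul c)

lemma gram_qf_nonneg (hk : IsKernel k) {m : ℕ} (X : Fin m → 𝒳) (v : Fin m → ℝ) :
    0 ≤ v ⬝ᵥ (gramMat k X *ᵥ v) := by
  have := (hk.2 m X).dotProduct_mulVec_nonneg v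
  simpa using this

lemma Mmat_qf_nonneg (hk : IsKernel k) {m : ℕ} (X : Fin m → 𝒳) {c : ℝ} (hc : 0 ≤ c)
    (v : Fin m → ℝ) :
    0 ≤ v ⬝ᵥ ((gramMat k X + c • (1 : Matrix (Fin m) (Fin m) ℝ)) *ᵥ v) := by
  rw [Matrix.add_mulVec, dotProduct_add, smul_one_qf]
  have h1 := gram_qf_nonneg hk X v
  have h2 : 0 ≤ v ⬝ᵥ v := by simpa using dotProduct_star_self_nonneg v
  positivity

lemma gram_le_Mmat_qf (hk : IsKernel k) {m : ℕ} (X : Fin m → 𝒳) {c : ℝ} (hc : 0 ≤ c)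
    (v : Fin m → ℝ) :
    v ⬝ᵥ (gramMat k X *ᵥ v) ≤ v ⬝ᵥ ((gramMat k X + c • (1 : Matrix (Fin m) (Fin m) ℝ)) *ᵥ v) := by
  rw [Matrix.add_mulVec, dotProduct_add, smul_one_qf]
  have h2 : 0 ≤ v ⬝ᵥ v := by simpa using dotProduct_star_self_nonneg v
  nlinarith

end Helpers

section Schur
variable {𝒳 : Type u} {k : 𝒳 → 𝒳 → ℝ}

lemma snoc_dot {m : ℕ} (y z : Fin m → ℝ) (c d : ℝ) :
    (Fin.snoc y c : Fin (m+1) → ℝ) ⬝ᵥ (Fin.snoc z d : Fin (m+1) → ℝ) = y ⬝ᵥ z + c * d := by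
  show ∑ i : Fin (m+1), _ = _
  rw [Fin.sum_univ_castSucc]
  simp [dotProduct]

lemma gram_snoc_mulVec (hk : IsKernel k) {m : ℕ} (X : Fin m → 𝒳) (x : 𝒳) (y : Fin m → ℝ) :
    gramMat k (Fin.snoc X x) *ᵥ (Fin.snoc y 1 : Fin (m+1) → ℝ)
      = Fin.snoc (gramMat k X *ᵥ y + kVec k X x) (kVec k X x ⬝ᵥ y + k x x) := by
  funext i
  refine Fin.lastCases ?_ ?_ i
  · simp only [Matrix.mulVec, dotProduct, Fin.snoc_last]
    rw [Fin.sum_univ_castSucc]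
    simp [gramMat, kVec, dotProduct, Fin.snoc_castSucc, Fin.snoc_last]
  · intro p
    simp only [Matrix.mulVec, dotProduct, Fin.snoc_castSucc]
    rw [Fin.sum_univ_castSucc]
    simp [gramMat, kVec, Matrix.mulVec, dotProduct, Fin.snoc_castSucc, Fin.snoc_last,
      hk.1 (X p) x]

lemma postVar_nonneg (hk : IsKernel k) {m : ℕ} (X : Fin m → 𝒳) (x : 𝒳) {c : ℝ} (hc : 0 ≤ c)
    (hdet : (gramMat k X + c • (1 : Matrix (Fin m) (Fin m) ℝ)).det ≠ 0) :
    0 ≤ postVar k (c • (1 : Matrix (Fin m) (Fin m) ℝ)) X x := by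
  set M := gramMat k X + c • (1 : Matrix (Fin m) (Fin m) ℝ) with hM
  set kv := kVec k X x with hkv
  set p : Fin m → ℝ := M⁻¹ *ᵥ kv with hp
  have hMp : M *ᵥ p = kv := by
    rw [hp, Matrix.mulVec_mulVec, Matrix.mul_nonsing_inv _ (isUnit_iff_ne_zero.mpr hdet),
      Matrix.one_mulVec]
  -- PSD of the (m+1)-point Gram matrix at vector snoc (-p) 1
  have hpsd := gram_qf_nonneg hk (Fin.snoc X x) (Fin.snoc (-p) 1)
  rw [gram_snoc_mulVec hk X x (-p), snoc_dot] at hpsd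
  rw [dotProduct_add, Matrix.mulVec_neg, dotProduct_neg, neg_dotProduct,
    neg_dotProduct, dotProduct_neg] at hpsd
  -- hpsd : 0 ≤ p ⬝ᵥ (gramMat k X *ᵥ p) - p ⬝ᵥ kv + (-(kv ⬝ᵥ p) + k x x) * 1
  have h1 : p ⬝ᵥ (gramMat k X *ᵥ p) ≤ p ⬝ᵥ (M *ᵥ p) := gram_le_Mmat_qf hk X hc p
  have h2 : p ⬝ᵥ (M *ᵥ p) = kv ⬝ᵥ p := by rw [hMp, dotProduct_comm]
  have h3 : p ⬝ᵥ kv = kv ⬝ᵥ p := dotProduct_comm _ _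
  have : 0 ≤ k x x - kv ⬝ᵥ p := by nlinarith
  simpa [postVar, hM, hkv, hp] using this

end Schur

section Chain
variable {𝒳 : Type u} {k : 𝒳 → 𝒳 → ℝ}

lemma Mmat_posDef (hk : IsKernel k) {m : ℕ} (X : Fin m → 𝒳) {c : ℝ} (hc : 0 < c) :
    (gramMat k X + c • (1 : Matrix (Fin m) (Fin m) ℝ)).PosDef := by
  refine Matrix.PosDef.posSemidef_add (hk.2 m X) ?_
  exact Matrix.PosDef.one.smul hc

lemma submatrix_blocks (t : ℕ) (M : Matrix (Fin (t+1)) (Fin (t+1)) ℝ) (g : ℕ → ℕ → ℝ) (c : ℝ)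
    (hM : ∀ i j, M i j = g i.val j.val + (if (i:ℕ) = (j:ℕ) then c else 0)) :
    M.submatrix (finSumFinEquiv : Fin t ⊕ Fin 1 ≃ Fin (t+1)) finSumFinEquiv
      = Matrix.fromBlocks
        (Matrix.of fun i j : Fin t => g i.val j.val + (if (i:ℕ) = (j:ℕ) then c else 0))
        (Matrix.of fun (i : Fin t) (_ : Fin 1) => g i.val t)
        (Matrix.of fun (_ : Fin 1) (j : Fin t) => g t j.val)
        (Matrix.of fun (_ _ : Fin 1) => g t t + c) := by
  ext i j
  cases i with
  | inl i =>
    cases j with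
    | inl j => simp [hM]
    | inr j =>
      have hj : (j : ℕ) = 0 := by omega
      simp [hM, hj]
      exact fun h => absurd h (by have := i.is_lt; omega)
  | inr i =>
    have hi : (i : ℕ) = 0 := by omega
    cases j with
    | inl j =>
      simp [hM, hi]
      exact fun h => absurd h.symm (by have := j.is_lt; omega)
    | inr j =>
      have hj : (j : ℕ) = 0 := by omega
      simp [hM, hi, hj]

lemma Mmat_entries (xs : ℕ → 𝒳) (t : ℕ) (c : ℝ) (i j : Fin (t+1)) :
    (gramMat k (preT xs (t+1)) + c • (1 : Matrix (Fin (t+1)) (Fin (t+1)) ℝ)) i j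
      = k (xs i.val) (xs j.val) + (if (i:ℕ) = (j:ℕ) then c else 0) := by
  simp [gramMat, preT, Matrix.one_apply, Fin.ext_iff, apply_ite (fun r : ℝ => c * r)]

lemma det_step (hk : IsKernel k) (xs : ℕ → 𝒳) (t : ℕ) {c : ℝ} (hc : 0 < c) :
    (gramMat k (preT xs (t+1)) + c • (1 : Matrix (Fin (t+1)) (Fin (t+1)) ℝ)).det
      = (gramMat k (preT xs t) + c • (1 : Matrix (Fin t) (Fin t) ℝ)).det
        * (c + postVar k (c • (1 : Matrix (Fin t) (Fin t) ℝ)) (preT xs t) (xs t)) := by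
  set A := gramMat k (preT xs t) + c • (1 : Matrix (Fin t) (Fin t) ℝ) with hA
  set M := gramMat k (preT xs (t+1)) + c • (1 : Matrix (Fin (t+1)) (Fin (t+1)) ℝ) with hM
  have hdetA : A.det ≠ 0 := ne_of_gt (Mmat_posDef hk (preT xs t) hc).det_pos
  haveI : Invertible A := A.invertibleOfIsUnitDet (isUnit_iff_ne_zero.mpr hdetA)
  have hAeq : A = Matrix.of fun i j : Fin t =>
      k (xs i.val) (xs j.val) + (if (i:ℕ) = (j:ℕ) then c else 0) := by
    ext i j
    simp [hA, gramMat, preT, Matrix.one_apply, Fin.ext_iff, apply_ite (fun r : ℝ => c * r)]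
  set B : Matrix (Fin t) (Fin 1) ℝ := Matrix.of (fun (i : Fin t) (_ : Fin 1) => k (xs i.val) (xs t)) with hB
  set C : Matrix (Fin 1) (Fin t) ℝ := Matrix.of (fun (_ : Fin 1) (j : Fin t) => k (xs t) (xs j.val)) with hC
  set D : Matrix (Fin 1) (Fin 1) ℝ := Matrix.of (fun (_ _ : Fin 1) => k (xs t) (xs t) + c) with hD
  have hsub : M.submatrix (finSumFinEquiv : Fin t ⊕ Fin 1 ≃ Fin (t+1)) finSumFinEquiv
      = Matrix.fromBlocks A B C D := by
    have := submatrix_blocks t M (fun a b => k (xs a) (xs b)) c (Mmat_entries xs t c)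
    rw [this, hAeq]
  have hdet1 : M.det = (Matrix.fromBlocks A B C D).det := by
    rw [← hsub, Matrix.det_submatrix_equiv_self]
  rw [hdet1, Matrix.det_fromBlocks₁₁, Matrix.invOf_eq_nonsing_inv]
  congr 1
  rw [Matrix.det_fin_one]
  have hCB : (C * A⁻¹ * B) 0 0
      = kVec k (preT xs t) (xs t) ⬝ᵥ (A⁻¹ *ᵥ kVec k (preT xs t) (xs t)) := by
    rw [Matrix.mul_assoc, Matrix.mul_apply]
    refine Finset.sum_congr rfl fun i _ => ?_
    have h1 : C 0 i = kVec k (preT xs t) (xs t) i := rfl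
    have h2 : (A⁻¹ * B) i 0 = (A⁻¹ *ᵥ kVec k (preT xs t) (xs t)) i := by
      rw [Matrix.mul_apply]
      refine Finset.sum_congr rfl fun j _ => ?_
      simp [hB, kVec, preT, hk.1 (xs j.val) (xs t)]
    rw [h1, h2]
  have hsubD : (D - C * A⁻¹ * B) 0 0 = D 0 0 - (C * A⁻¹ * B) 0 0 := rfl
  rw [hsubD, hCB]
  show (k (xs t) (xs t) + c) - _ = _
  rw [postVar]
  rw [show gramMat k (preT xs t) + c • (1 : Matrix (Fin t) (Fin t) ℝ) = A from rfl]
  ring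

end Chain

section IG
variable {𝒳 : Type u} {k : 𝒳 → 𝒳 → ℝ}

lemma det_prod (hk : IsKernel k) (xs : ℕ → 𝒳) {c : ℝ} (hc : 0 < c) (t : ℕ) :
    (gramMat k (preT xs t) + c • (1 : Matrix (Fin t) (Fin t) ℝ)).det
      = ∏ s ∈ Finset.range t,
          (c + postVar k (c • (1 : Matrix (Fin s) (Fin s) ℝ)) (preT xs s) (xs s)) := by
  induction t with
  | zero => simp [Matrix.det_fin_zero]
  | succ n ih => rw [det_step hk xs n hc, ih, Finset.prod_range_succ]

lemma infoGain_sum (hk : IsKernel k) (xs : ℕ → 𝒳) {c : ℝ} (hc : 0 < c) (T : ℕ) :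
    infoGain k (c • (1 : Matrix (Fin T) (Fin T) ℝ)) (preT xs T)
      = (1/2) * ∑ s ∈ Finset.range T,
          Real.log ((c + postVar k (c • (1 : Matrix (Fin s) (Fin s) ℝ)) (preT xs s) (xs s)) / c) := by
  have hw : ∀ s : ℕ, 0 ≤ postVar k (c • (1 : Matrix (Fin s) (Fin s) ℝ)) (preT xs s) (xs s) :=
    fun s => postVar_nonneg hk _ _ hc.le (ne_of_gt (Mmat_posDef hk (preT xs s) hc).det_pos)
  have hdetS : (c • (1 : Matrix (Fin T) (Fin T) ℝ)).det = c ^ T := by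
    rw [Matrix.det_smul, Matrix.det_one, Fintype.card_fin, mul_one]
  rw [infoGain, add_comm (c • _) (gramMat k (preT xs T)), det_prod hk xs hc T, hdetS]
  have hcT : (c : ℝ) ^ T = ∏ _s ∈ Finset.range T, c := by
    rw [Finset.prod_const, Finset.card_range]
  rw [hcT, ← Finset.prod_div_distrib]
  rw [Real.log_prod]
  intro s _
  have := hw s
  positivity

lemma log_one_add_ge {u : ℝ} (h0 : 0 ≤ u) (h1 : u ≤ 1) :
    u * Real.log 2 ≤ Real.log (1 + u) := by
  have hexp : Real.exp (u * Real.log 2) ≤ 1 + u := by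
    have hcvx := convexOn_exp.2 (Set.mem_univ (0:ℝ)) (Set.mem_univ (Real.log 2))
      (by linarith : (0:ℝ) ≤ 1 - u) h0 (by ring)
    have h2 : Real.exp (Real.log 2) = 2 := Real.exp_log (by norm_num)
    simp only [smul_eq_mul, mul_zero, zero_add, Real.exp_zero, h2] at hcvx
    calc Real.exp (u * Real.log 2) = Real.exp ((1-u) * 0 + u * Real.log 2) := by ring_nf
      _ ≤ (1-u) * 1 + u * 2 := by simpa [h2] using hcvx
      _ = 1 + u := by ring
  calc u * Real.log 2 = Real.log (Real.exp (u * Real.log 2)) := (Real.log_exp _).symm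
    _ ≤ Real.log (1 + u) := Real.log_le_log (Real.exp_pos _) hexp

end IG


/-- posterior variance upper bound for MVR with stationary noise level. -/
theorem mvr_posterior_variance_bound_stationary
    {𝒳 : Type u} (k : 𝒳 → 𝒳 → ℝ) (hk : IsKernel k)
    (T : ℕ) (hT : 0 < T)
    (lamBar lamTil : ℝ) (hBar : 0 ≤ lamBar) (hTil : 0 < lamTil) (hle : lamBar ≤ lamTil)
    (Xtil : Set 𝒳) (hXtil : Xtil.Nonempty)
    (xs : ℕ → 𝒳) (hmem : ∀ t < T, xs t ∈ Xtil)
    (hinv : ∀ t ≤ T,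
      (gramMat k (preT xs t) + (lamBar ^ 2) • (1 : Matrix (Fin t) (Fin t) ℝ)).det ≠ 0)
    (hMVR : ∀ t < T, ∀ x ∈ Xtil,
      postStd k ((lamBar ^ 2) • (1 : Matrix (Fin t) (Fin t) ℝ)) (preT xs t) x
        ≤ postStd k ((lamBar ^ 2) • (1 : Matrix (Fin t) (Fin t) ℝ)) (preT xs t) (xs t))
    (γ : ℝ) (hγ : 0 ≤ γ)
    (hIG : ∀ Z : Fin T → 𝒳,
      infoGain k ((lamTil ^ 2) • (1 : Matrix (Fin T) (Fin T) ℝ)) Z ≤ γ)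
    (hbig : (T : ℝ) / 2 ≥ 3 * γ) :
    ∀ x ∈ Xtil,
      postStd k ((lamBar ^ 2) • (1 : Matrix (Fin T) (Fin T) ℝ)) (preT xs T) x
        ≤ (4 / (T : ℝ)) * Real.sqrt (lamTil ^ 2 * T * γ) := by
  intro x hx
  simp only [postStd]
  have hcb : (0:ℝ) ≤ lamBar ^ 2 := sq_nonneg _
  have hct : (0:ℝ) < lamTil ^ 2 := by positivity
  have hcbt : lamBar ^ 2 ≤ lamTil ^ 2 := by
    exact pow_le_pow_left₀ hBar hle 2
  set w : ℕ → ℝ := fun s =>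
    postVar k ((lamTil ^ 2) • (1 : Matrix (Fin s) (Fin s) ℝ)) (preT xs s) (xs s) with hwdef
  have hw0 : ∀ s, 0 ≤ w s := fun s =>
    postVar_nonneg hk _ _ hct.le (ne_of_gt (Mmat_posDef hk (preT xs s) hct).det_pos)
  set L : ℕ → ℝ := fun s => Real.log ((lamTil ^ 2 + w s) / lamTil ^ 2) with hLdef
  have hIGsum : ∑ s ∈ Finset.range T, L s ≤ 2 * γ := by
    have h1 := infoGain_sum hk xs hct T
    have h2 := hIG (preT xs T)
    rw [h1] at h2
    linarith
  have hterm_nonneg : ∀ s, 0 ≤ L s := by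
    intro s
    apply Real.log_nonneg
    rw [le_div_iff₀ hct]
    linarith [hw0 s]
  -- step bound
  set a : ℝ := postVar k ((lamBar ^ 2) • (1 : Matrix (Fin T) (Fin T) ℝ)) (preT xs T) x with hadef
  have ha0 : 0 ≤ a := postVar_nonneg hk _ x hcb (hinv T le_rfl)
  have hstep : ∀ s, s < T → a ≤ w s := by
    intro s hsT
    have hsle : s ≤ T := hsT.le
    have hA_entries : ∀ i j, (gramMat k (preT xs s) + (lamBar ^ 2) • (1 : Matrix (Fin s) (Fin s) ℝ)) i j
        = (gramMat k (preT xs T) + (lamBar ^ 2) • (1 : Matrix (Fin T) (Fin T) ℝ))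
            (Fin.castLE hsle i) (Fin.castLE hsle j) := by
      intro i j
      simp [gramMat, preT, Matrix.one_apply, Fin.ext_iff]
    have h1 : a ≤ postVar k ((lamBar ^ 2) • (1 : Matrix (Fin s) (Fin s) ℝ)) (preT xs s) x := by
      have hres := restrict_qf hsle (Mmat_isSymm hk (preT xs T) (lamBar ^ 2))
        (hinv T le_rfl) (Mmat_qf_nonneg hk (preT xs T) hcb)
        (gramMat k (preT xs s) + (lamBar ^ 2) • (1 : Matrix (Fin s) (Fin s) ℝ))
        hA_entries (hinv s hsle)
        (kVec k (preT xs T) x) (kVec k (preT xs s) x) (fun j => rfl)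
      rw [hadef, postVar, postVar]
      linarith
    have hvx := postVar_nonneg hk (preT xs s) x hcb (hinv s hsle)
    have hvxs := postVar_nonneg hk (preT xs s) (xs s) hcb (hinv s hsle)
    have h2 : postVar k ((lamBar ^ 2) • (1 : Matrix (Fin s) (Fin s) ℝ)) (preT xs s) x
        ≤ postVar k ((lamBar ^ 2) • (1 : Matrix (Fin s) (Fin s) ℝ)) (preT xs s) (xs s) := by
      have hstd := hMVR s hsT x hx
      simp only [postStd] at hstd
      calc postVar k ((lamBar ^ 2) • (1 : Matrix (Fin s) (Fin s) ℝ)) (preT xs s) x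
          = Real.sqrt _ * Real.sqrt _ := (Real.mul_self_sqrt hvx).symm
        _ ≤ Real.sqrt (postVar k ((lamBar ^ 2) • (1 : Matrix (Fin s) (Fin s) ℝ)) (preT xs s) (xs s))
            * Real.sqrt (postVar k ((lamBar ^ 2) • (1 : Matrix (Fin s) (Fin s) ℝ)) (preT xs s) (xs s)) :=
            mul_self_le_mul_self (Real.sqrt_nonneg _) hstd
        _ = _ := Real.mul_self_sqrt hvxs
    have h3 : postVar k ((lamBar ^ 2) • (1 : Matrix (Fin s) (Fin s) ℝ)) (preT xs s) (xs s) ≤ w s := by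
      have hMN : ∀ v : Fin s → ℝ,
          v ⬝ᵥ ((gramMat k (preT xs s) + (lamBar ^ 2) • (1 : Matrix (Fin s) (Fin s) ℝ)) *ᵥ v)
          ≤ v ⬝ᵥ ((gramMat k (preT xs s) + (lamTil ^ 2) • (1 : Matrix (Fin s) (Fin s) ℝ)) *ᵥ v) := by
        intro v
        rw [Matrix.add_mulVec, dotProduct_add, Matrix.add_mulVec, dotProduct_add,
          smul_one_qf, smul_one_qf]
        have hvv : 0 ≤ v ⬝ᵥ v := by simpa using dotProduct_star_self_nonneg v
        nlinarith
      have hanti := inv_anti (Mmat_isSymm hk (preT xs s) (lamBar ^ 2)) (hinv s hsle)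
        (Mmat_qf_nonneg hk (preT xs s) hcb) (Mmat_isSymm hk (preT xs s) (lamTil ^ 2))
        (ne_of_gt (Mmat_posDef hk (preT xs s) hct).det_pos) hMN (kVec k (preT xs s) (xs s))
      rw [postVar, hwdef]
      simp only [postVar]
      linarith
    linarith
  -- counting
  have hlog2 : (0.6931471803 : ℝ) < Real.log 2 := Real.log_two_gt_d9
  set Sbad := (Finset.range T).filter (fun s => lamTil ^ 2 ≤ w s) with hSbaddef
  set Good := (Finset.range T).filter (fun s => ¬ lamTil ^ 2 ≤ w s) with hGooddef
  have hcards : Sbad.card + Good.card = T := by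
    rw [hSbaddef, hGooddef, Finset.card_filter_add_card_filter_not, Finset.card_range]
  have hsum_bad : (Sbad.card : ℝ) * Real.log 2 ≤ 2 * γ := by
    have h1 : ∑ _s ∈ Sbad, Real.log 2 ≤ ∑ s ∈ Sbad, L s := by
      refine Finset.sum_le_sum fun s hs => ?_
      have hws : lamTil ^ 2 ≤ w s := (Finset.mem_filter.mp hs).2
      refine Real.log_le_log (by norm_num) ?_
      rw [le_div_iff₀ hct]
      linarith
    have h2 : ∑ s ∈ Sbad, L s ≤ ∑ s ∈ Finset.range T, L s :=
      Finset.sum_le_sum_of_subset_of_nonneg (Finset.filter_subset _ _)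
        (fun i _ _ => hterm_nonneg i)
    rw [Finset.sum_const, nsmul_eq_mul] at h1
    linarith
  have hScard : (Sbad.card : ℝ) ≤ 3 * γ := by
    have hS0 : (0:ℝ) ≤ (Sbad.card : ℝ) := Nat.cast_nonneg _
    nlinarith [mul_le_mul_of_nonneg_left hlog2.le hS0]
  have hGcard : (T : ℝ) / 2 ≤ (Good.card : ℝ) := by
    have : (Sbad.card : ℝ) + (Good.card : ℝ) = (T : ℝ) := by
      exact_mod_cast congrArg (Nat.cast : ℕ → ℝ) hcards
    linarith
  have hgoodsum : ∑ s ∈ Good, w s ≤ 3 * γ * lamTil ^ 2 := by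
    have hbound : ∀ s ∈ Good, w s * Real.log 2 ≤ lamTil ^ 2 * L s := by
      intro s hs
      have hws : ¬ lamTil ^ 2 ≤ w s := (Finset.mem_filter.mp hs).2
      have hwle : w s ≤ lamTil ^ 2 := (not_le.mp hws).le
      have hu0 : 0 ≤ w s / lamTil ^ 2 := div_nonneg (hw0 s) hct.le
      have hu1 : w s / lamTil ^ 2 ≤ 1 := by rw [div_le_one hct]; linarith
      have hlg := log_one_add_ge hu0 hu1
      have heq : 1 + w s / lamTil ^ 2 = (lamTil ^ 2 + w s) / lamTil ^ 2 := by
        field_simp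
      rw [heq] at hlg
      calc w s * Real.log 2 = lamTil ^ 2 * (w s / lamTil ^ 2 * Real.log 2) := by
            field_simp
        _ ≤ lamTil ^ 2 * L s := mul_le_mul_of_nonneg_left hlg hct.le
    have h1 : (∑ s ∈ Good, w s) * Real.log 2 ≤ lamTil ^ 2 * ∑ s ∈ Good, L s := by
      rw [Finset.sum_mul, Finset.mul_sum]
      exact Finset.sum_le_sum hbound
    have h2 : ∑ s ∈ Good, L s ≤ 2 * γ :=
      le_trans (Finset.sum_le_sum_of_subset_of_nonneg (Finset.filter_subset _ _)
        (fun i _ _ => hterm_nonneg i)) hIGsum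
    have h3 : 0 ≤ ∑ s ∈ Good, w s := Finset.sum_nonneg fun s _ => hw0 s
    nlinarith [mul_nonneg (sub_nonneg.mpr hlog2.le) h3, mul_nonneg hct.le hγ,
      mul_le_mul_of_nonneg_left h2 hct.le]
  have hfinal : a * ((T : ℝ) / 2) ≤ 3 * γ * lamTil ^ 2 := by
    have h1 : a * (Good.card : ℝ) ≤ ∑ s ∈ Good, w s := by
      have hsum : ∑ _s ∈ Good, a ≤ ∑ s ∈ Good, w s :=
        Finset.sum_le_sum fun s hs =>
          hstep s (Finset.mem_range.mp (Finset.mem_filter.mp hs).1)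
      rw [Finset.sum_const, nsmul_eq_mul] at hsum
      linarith [hsum]
    have h2 : a * ((T : ℝ) / 2) ≤ a * (Good.card : ℝ) :=
      mul_le_mul_of_nonneg_left hGcard ha0
    linarith
  have hT0 : (0:ℝ) < (T : ℝ) := by exact_mod_cast hT
  have haT : a ≤ 16 * lamTil ^ 2 * γ / T := by
    rw [le_div_iff₀ hT0]
    nlinarith [mul_nonneg (mul_nonneg hct.le hγ) hT0.le, mul_nonneg hct.le hγ]
  have hrhs : (4 / (T : ℝ)) * Real.sqrt (lamTil ^ 2 * T * γ)
      = Real.sqrt (16 * lamTil ^ 2 * γ / T) := by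
    rw [show (16 * lamTil ^ 2 * γ / (T:ℝ)) = (4 / (T:ℝ))^2 * (lamTil ^ 2 * T * γ) by
      field_simp; ring]
    rw [Real.sqrt_mul (sq_nonneg _), Real.sqrt_sq (by positivity)]
  rw [hrhs]
  exact Real.sqrt_le_sqrt haT
end
end

section
/- Fix T ∈ ℕ+, nonnegative reals λ_1,…,λ_T and strictly positive reals λ̃_1,…,λ̃_T with λ_t ≤ λ̃_t for all t, and a nonempty subset 𝒳̃ ⊆ 𝒳. Set Σ_t := diag(λ_1²,…,λ_t²) and Σ̃_T := diag(λ̃_1²,…,λ̃_T²). Let x_1,…,x_T ∈ 𝒳̃ be chosen by maximum variance reduction: for every t ∈ [T] and every x ∈ 𝒳̃, σ_{Σ_{t−1}}(x; X_{t−1}) ≤ σ_{Σ_{t−1}}(x_t; X_{t−1}), where X_{t−1} := (x_1,…,x_{t−1}); assume K(X_t,X_t)+Σ_t is invertible for every t ≤ T. Suppose γ ≥ 0 satisfies I_{Σ̃_T}(Z) ≤ γ for every T-tuple Z of points of 𝒳, and that T/2 ≥ 4γ. Then for every x ∈ 𝒳̃, σ_{Σ_T}(x; X_T) ≤ (4/T)·√((Σ_{t=1}^T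 λ̃_t²)·γ). -/
open Matrix Real Finset

noncomputable section

universe u

namespace MVRAux

/-- the quadratic objective whose minimum is the posterior variance -/
def quadObj {𝒳 : Type u} (k : 𝒳 → 𝒳 → ℝ) {m : ℕ} (A : Matrix (Fin m) (Fin m) ℝ)
    (X : Fin m → 𝒳) (x : 𝒳) (v : Fin m → ℝ) : ℝ :=
  k x x - 2 * (v ⬝ᵥ kVec k X x) + v ⬝ᵥ (A *ᵥ v)

lemma key {m : ℕ} (A : Matrix (Fin m) (Fin m) ℝ) (hsym : Aᵀ = A) (hdet : IsUnit A.det)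
    (c v : Fin m → ℝ) :
    (v - A⁻¹ *ᵥ c) ⬝ᵥ (A *ᵥ (v - A⁻¹ *ᵥ c))
      = v ⬝ᵥ (A *ᵥ v) - 2 * (v ⬝ᵥ c) + c ⬝ᵥ (A⁻¹ *ᵥ c) := by
  set u := A⁻¹ *ᵥ c with hu
  have hAu : A *ᵥ u = c := by
    rw [hu, mulVec_mulVec, Matrix.mul_nonsing_inv _ hdet, one_mulVec]
  have huAv : ∀ w : Fin m → ℝ, u ⬝ᵥ (A *ᵥ w) = c ⬝ᵥ w := by
    intro w
    rw [dotProduct_mulVec, ← Matrix.mulVec_transpose, hsym, hAu]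
  have h1 : u ⬝ᵥ c = c ⬝ᵥ u := dotProduct_comm _ _
  have h2 : v ⬝ᵥ c = c ⬝ᵥ v := dotProduct_comm _ _
  simp only [mulVec_sub, dotProduct_sub, sub_dotProduct, hAu, huAv, h1, h2]
  ring

end MVRAux

namespace MVRAux2

variable {𝒳 : Type u} {k : 𝒳 → 𝒳 → ℝ} {m : ℕ} {S : Matrix (Fin m) (Fin m) ℝ}
  {X : Fin m → 𝒳} {x : 𝒳}

lemma postVar_le_quadObj (hk : IsKernel k) (hS : S.PosSemidef)
    (hdet : (gramMat k X + S).det ≠ 0) (v : Fin m → ℝ) :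
    postVar k S X x ≤ MVRAux.quadObj k (gramMat k X + S) X x v := by
  set A := gramMat k X + S with hA
  have hPSD : A.PosSemidef := (hk.2 m X).add hS
  have hsym : Aᵀ = A := by simpa using hPSD.1.eq
  have hkey := MVRAux.key A hsym (isUnit_iff_ne_zero.mpr hdet) (kVec k X x) v
  have hnn : 0 ≤ (v - A⁻¹ *ᵥ kVec k X x) ⬝ᵥ (A *ᵥ (v - A⁻¹ *ᵥ kVec k X x)) := by
    simpa using hPSD.dotProduct_mulVec_nonneg (v - A⁻¹ *ᵥ kVec k X x)
  rw [hkey] at hnn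
  simp only [MVRAux.quadObj, postVar, ← hA]
  linarith

lemma postVar_eq_quadObj (hk : IsKernel k) (hS : S.PosSemidef)
    (hdet : (gramMat k X + S).det ≠ 0) :
    postVar k S X x
      = MVRAux.quadObj k (gramMat k X + S) X x
          ((gramMat k X + S)⁻¹ *ᵥ kVec k X x) := by
  set A := gramMat k X + S with hA
  have hPSD : A.PosSemidef := (hk.2 m X).add hS
  have hsym : Aᵀ = A := by simpa using hPSD.1.eq
  have hkey := MVRAux.key A hsym (isUnit_iff_ne_zero.mpr hdet) (kVec k X x)
    (A⁻¹ *ᵥ kVec k X x)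
  simp only [sub_self, zero_dotProduct] at hkey
  simp only [MVRAux.quadObj, postVar, ← hA]
  linarith


lemma h1 : ∀ (n : ℕ) (M : Matrix (Fin n) (Fin n) ℝ) (w : Fin n → ℝ),
    w ⬝ᵥ (M *ᵥ w) = ∑ i, ∑ j, w i * (M i j * w j) := by
  intro n M w
  simp [dotProduct, Matrix.mulVec, Finset.mul_sum]

lemma gram_expand (hk : IsKernel k) (v : Fin m → ℝ) :
    (Fin.snoc v (-1) : Fin (m+1) → ℝ) ⬝ᵥ (gramMat k (Fin.snoc X x) *ᵥ (Fin.snoc v (-1)))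
      = k x x - 2 * (v ⬝ᵥ kVec k X x) + v ⬝ᵥ (gramMat k X *ᵥ v) := by
  rw [h1, h1]
  simp only [Fin.sum_univ_castSucc, Fin.snoc_castSucc, Fin.snoc_last, gramMat,
    Matrix.of_apply, Finset.sum_add_distrib]
  simp only [dotProduct, kVec, Finset.mul_sum]
  have h2 : ∀ i, k (X i) x = k x (X i) := fun i => hk.1 _ _
  simp only [h2]
  have e1 : ∑ j : Fin m, -1 * (k x (X j) * v j) = -∑ j : Fin m, v j * k x (X j) := by
    rw [← Finset.sum_neg_distrib]; exact Finset.sum_congr rfl fun j _ => by ring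
  have e2 : ∑ j : Fin m, v j * (k x (X j) * -1) = -∑ j : Fin m, v j * k x (X j) := by
    rw [← Finset.sum_neg_distrib]; exact Finset.sum_congr rfl fun j _ => by ring
  have e3 : ∑ j : Fin m, 2 * (v j * k x (X j)) = 2 * ∑ j : Fin m, v j * k x (X j) := by
    rw [Finset.mul_sum]
  rw [e1, e2, e3]
  ring

lemma gramQuad_nonneg (hk : IsKernel k) (v : Fin m → ℝ) :
    0 ≤ k x x - 2 * (v ⬝ᵥ kVec k X x) + v ⬝ᵥ (gramMat k X *ᵥ v) := by
  rw [← gram_expand hk v]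
  simpa using (hk.2 (m+1) (Fin.snoc X x)).dotProduct_mulVec_nonneg (Fin.snoc v (-1))

lemma postVar_nonneg (hk : IsKernel k) (hS : S.PosSemidef)
    (hdet : (gramMat k X + S).det ≠ 0) : 0 ≤ postVar k S X x := by
  rw [MVRAux2.postVar_eq_quadObj hk hS hdet]
  set u := (gramMat k X + S)⁻¹ *ᵥ kVec k X x
  have hsplit : u ⬝ᵥ ((gramMat k X + S) *ᵥ u)
      = u ⬝ᵥ (gramMat k X *ᵥ u) + u ⬝ᵥ (S *ᵥ u) := by
    rw [Matrix.add_mulVec, dotProduct_add]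
  have h2 : 0 ≤ u ⬝ᵥ (S *ᵥ u) := by simpa using hS.dotProduct_mulVec_nonneg u
  have h3 := gramQuad_nonneg (X := X) (x := x) hk u
  simp only [MVRAux.quadObj, hsplit]
  linarith

lemma snoc_kvec {X' : Fin (m+1) → 𝒳} (v : Fin m → ℝ) :
    (Fin.snoc v 0 : Fin (m+1) → ℝ) ⬝ᵥ kVec k X' x = v ⬝ᵥ kVec k (X' ∘ Fin.castSucc) x := by
  simp [dotProduct, kVec, Fin.sum_univ_castSucc]

lemma snoc_quad {X' : Fin (m+1) → 𝒳} (d' : Fin (m+1) → ℝ) (v : Fin m → ℝ) :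
    (Fin.snoc v 0 : Fin (m+1) → ℝ) ⬝ᵥ ((gramMat k X' + Matrix.diagonal d') *ᵥ (Fin.snoc v 0 : Fin (m+1) → ℝ))
      = v ⬝ᵥ ((gramMat k (X' ∘ Fin.castSucc) + Matrix.diagonal (d' ∘ Fin.castSucc)) *ᵥ v) := by
  rw [h1, h1]
  simp only [Fin.sum_univ_castSucc, Fin.snoc_castSucc, Fin.snoc_last, gramMat,
    Matrix.add_apply, Matrix.of_apply, Matrix.diagonal_apply, Function.comp_apply,
    Fin.castSucc_inj, zero_mul, mul_zero, add_zero, Finset.sum_const_zero]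

lemma postVar_design_mono (hk : IsKernel k) (X' : Fin (m+1) → 𝒳) (d' : Fin (m+1) → ℝ)
    (hd' : ∀ i, 0 ≤ d' i)
    (hdet1 : (gramMat k (X' ∘ Fin.castSucc) + Matrix.diagonal (d' ∘ Fin.castSucc)).det ≠ 0)
    (hdet2 : (gramMat k X' + Matrix.diagonal d').det ≠ 0) :
    postVar k (Matrix.diagonal d') X' x
      ≤ postVar k (Matrix.diagonal (d' ∘ Fin.castSucc)) (X' ∘ Fin.castSucc) x := by
  have hS1 : (Matrix.diagonal (d' ∘ Fin.castSucc)).PosSemidef :=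
    Matrix.posSemidef_diagonal_iff.2 fun i => hd' _
  have hS2 : (Matrix.diagonal d').PosSemidef := Matrix.posSemidef_diagonal_iff.2 hd'
  set v := (gramMat k (X' ∘ Fin.castSucc) + Matrix.diagonal (d' ∘ Fin.castSucc))⁻¹
      *ᵥ kVec k (X' ∘ Fin.castSucc) x with hv
  have heqs := MVRAux2.postVar_eq_quadObj (X := X' ∘ Fin.castSucc) (x := x) hk hS1 hdet1
  have hbig := MVRAux2.postVar_le_quadObj (X := X') (x := x) hk hS2 hdet2
    (Fin.snoc v 0)
  rw [← hv] at heqs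
  calc postVar k (Matrix.diagonal d') X' x
      ≤ MVRAux.quadObj k (gramMat k X' + Matrix.diagonal d') X' x (Fin.snoc v 0) := hbig
    _ = MVRAux.quadObj k (gramMat k (X' ∘ Fin.castSucc) + Matrix.diagonal (d' ∘ Fin.castSucc))
          (X' ∘ Fin.castSucc) x v := by
        simp only [MVRAux.quadObj, snoc_kvec, snoc_quad]
    _ = postVar k (Matrix.diagonal (d' ∘ Fin.castSucc)) (X' ∘ Fin.castSucc) x := heqs.symm

lemma postVar_noise_mono (hk : IsKernel k) (d d' : Fin m → ℝ)
    (hd : ∀ i, 0 ≤ d i) (hdd' : ∀ i, d i ≤ d' i)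
    (hdet : (gramMat k X + Matrix.diagonal d).det ≠ 0)
    (hdet' : (gramMat k X + Matrix.diagonal d').det ≠ 0) :
    postVar k (Matrix.diagonal d) X x ≤ postVar k (Matrix.diagonal d') X x := by
  have hS : (Matrix.diagonal d).PosSemidef := Matrix.posSemidef_diagonal_iff.2 hd
  have hS' : (Matrix.diagonal d').PosSemidef :=
    Matrix.posSemidef_diagonal_iff.2 fun i => (hd i).trans (hdd' i)
  set v := (gramMat k X + Matrix.diagonal d')⁻¹ *ᵥ kVec k X x with hv
  have heqs := MVRAux2.postVar_eq_quadObj (X := X) (x := x) hk hS' hdet'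
  rw [← hv] at heqs
  have hle := MVRAux2.postVar_le_quadObj (X := X) (x := x) hk hS hdet v
  have hquad : MVRAux.quadObj k (gramMat k X + Matrix.diagonal d) X x v
      ≤ MVRAux.quadObj k (gramMat k X + Matrix.diagonal d') X x v := by
    simp only [MVRAux.quadObj]
    have hAd : gramMat k X + Matrix.diagonal d'
        = (gramMat k X + Matrix.diagonal d) + Matrix.diagonal (fun i => d' i - d i) := by
      rw [add_assoc, Matrix.diagonal_add]
      congr 1
      funext i
      ring
    have hsplit : v ⬝ᵥ ((gramMat k X + Matrix.diagonal d') *ᵥ v)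
        = v ⬝ᵥ ((gramMat k X + Matrix.diagonal d) *ᵥ v)
          + v ⬝ᵥ (Matrix.diagonal (fun i => d' i - d i) *ᵥ v) := by
      rw [hAd, Matrix.add_mulVec, dotProduct_add]
    have hpos : 0 ≤ v ⬝ᵥ (Matrix.diagonal (fun i => d' i - d i) *ᵥ v) := by
      simp only [dotProduct, Matrix.mulVec_diagonal]
      refine Finset.sum_nonneg fun i _ => ?_
      have : 0 ≤ d' i - d i := by linarith [hdd' i]
      nlinarith [mul_self_nonneg (v i)]
    rw [hsplit]
    linarith
  calc postVar k (Matrix.diagonal d) X x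
      ≤ MVRAux.quadObj k (gramMat k X + Matrix.diagonal d) X x v := hle
    _ ≤ MVRAux.quadObj k (gramMat k X + Matrix.diagonal d') X x v := hquad
    _ = postVar k (Matrix.diagonal d') X x := heqs.symm

lemma det_step (hk : IsKernel k) {t : ℕ}
    (X' : Fin (t+1) → 𝒳) (d' : Fin (t+1) → ℝ)
    (hdet : (gramMat k (X' ∘ Fin.castSucc) + Matrix.diagonal (d' ∘ Fin.castSucc)).det ≠ 0) :
    (gramMat k X' + Matrix.diagonal d').det
      = (gramMat k (X' ∘ Fin.castSucc) + Matrix.diagonal (d' ∘ Fin.castSucc)).det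
        * (d' (Fin.last t)
            + postVar k (Matrix.diagonal (d' ∘ Fin.castSucc)) (X' ∘ Fin.castSucc)
                (X' (Fin.last t))) := by
  set A := gramMat k (X' ∘ Fin.castSucc) + Matrix.diagonal (d' ∘ Fin.castSucc) with hA
  set c := kVec k (X' ∘ Fin.castSucc) (X' (Fin.last t)) with hc
  set B : Matrix (Fin t) (Fin 1) ℝ := Matrix.of fun i _ => c i with hB
  set C : Matrix (Fin 1) (Fin t) ℝ := Matrix.of fun _ j => c j with hC
  set D : Matrix (Fin 1) (Fin 1) ℝ := Matrix.of fun _ _ =>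
    k (X' (Fin.last t)) (X' (Fin.last t)) + d' (Fin.last t) with hD
  have hsymm1 : finSumFinEquiv.symm (Fin.last t) = Sum.inr (0 : Fin 1) := by
    have : (Fin.last t) = Fin.natAdd t (0 : Fin 1) := by
      ext; simp [Fin.natAdd, Fin.last]
    rw [this, finSumFinEquiv_symm_apply_natAdd]
  have hsymm2 : ∀ i : Fin t, finSumFinEquiv.symm (Fin.castSucc i) = Sum.inl i := by
    intro i
    exact finSumFinEquiv_symm_apply_castAdd i
  have heq : gramMat k X' + Matrix.diagonal d'
      = (Matrix.fromBlocks A B C D).submatrix finSumFinEquiv.symm finSumFinEquiv.symm := by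
    ext i j
    refine Fin.lastCases ?_ ?_ i
    · refine Fin.lastCases ?_ ?_ j
      · simp [hsymm1, Matrix.fromBlocks, hD, gramMat, Matrix.diagonal_apply]
      · intro j0
        simp [hsymm1, hsymm2, Matrix.fromBlocks, hC, hc, kVec, gramMat,
          Matrix.diagonal_apply, (Fin.castSucc_lt_last j0).ne']
    · intro i0
      refine Fin.lastCases ?_ ?_ j
      · simp [hsymm1, hsymm2, Matrix.fromBlocks, hB, hc, kVec, gramMat,
          Matrix.diagonal_apply, (Fin.castSucc_lt_last i0).ne, hk.1 (X' (Fin.castSucc i0))]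
      · intro j0
        simp [hsymm2, Matrix.fromBlocks, hA, gramMat, Matrix.diagonal_apply,
          Fin.castSucc_inj]
  have : Invertible A := A.invertibleOfIsUnitDet (isUnit_iff_ne_zero.2 (by rwa [hA]))
  rw [heq, Matrix.det_submatrix_equiv_self, Matrix.det_fromBlocks₁₁,
    Matrix.invOf_eq_nonsing_inv, Matrix.det_fin_one]
  have hCB : (C * A⁻¹ * B) 0 0 = c ⬝ᵥ (A⁻¹ *ᵥ c) := by
    simp only [Matrix.mul_apply, dotProduct, Matrix.mulVec, hB, hC, Matrix.of_apply,
      Finset.sum_mul, Finset.mul_sum]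
    rw [Finset.sum_comm]
    exact Finset.sum_congr rfl fun i _ => Finset.sum_congr rfl fun j _ => by ring
  simp only [Matrix.sub_apply, hCB, hD, Matrix.of_apply, postVar, ← hA, ← hc]
  ring

lemma posDef_diag_add (hk : IsKernel k) (d : Fin m → ℝ) (hd : ∀ i, 0 < d i) :
    (gramMat k X + Matrix.diagonal d).PosDef := by
  exact Matrix.PosDef.posSemidef_add (hk.2 m X) (Matrix.posDef_diagonal_iff.2 hd)

end MVRAux2


namespace MVRAux3

variable {𝒳 : Type u} {k : 𝒳 → 𝒳 → ℝ}

lemma preT_comp (xs : ℕ → 𝒳) (n : ℕ) : preT xs (n+1) ∘ Fin.castSucc = preT xs n :=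
  funext fun i => by simp [preT]

lemma dcomp (f : ℕ → ℝ) (n : ℕ) :
    (fun i : Fin (n+1) => f i.val ^ 2) ∘ Fin.castSucc = fun i : Fin n => f i.val ^ 2 :=
  funext fun i => by simp

lemma postVar_preT_anti (hk : IsKernel k) (xs : ℕ → 𝒳) (f : ℕ → ℝ) (x : 𝒳) :
    ∀ b : ℕ,
    (∀ n ≤ b, (gramMat k (preT xs n)
        + Matrix.diagonal (fun i : Fin n => f i.val ^ 2)).det ≠ 0) →
    ∀ a ≤ b,
      postVar k (Matrix.diagonal fun i : Fin b => f i.val ^ 2) (preT xs b) x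
        ≤ postVar k (Matrix.diagonal fun i : Fin a => f i.val ^ 2) (preT xs a) x := by
  intro b
  induction b with
  | zero =>
    intro _ a ha
    have : a = 0 := Nat.le_zero.mp ha
    subst this; exact le_rfl
  | succ n ih =>
    intro hdets a ha
    rcases Nat.eq_or_lt_of_le ha with h | h
    · subst h; exact le_rfl
    · have ha' : a ≤ n := Nat.lt_succ_iff.mp h
      have step : postVar k (Matrix.diagonal fun i : Fin (n+1) => f i.val ^ 2)
            (preT xs (n+1)) x
          ≤ postVar k (Matrix.diagonal fun i : Fin n => f i.val ^ 2) (preT xs n) x := by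
        have hmain := MVRAux2.postVar_design_mono (x := x) hk (preT xs (n+1))
          (fun i : Fin (n+1) => f i.val ^ 2) (fun i => sq_nonneg _)
          (by rw [preT_comp, dcomp]; exact hdets n (Nat.le_succ n))
          (hdets (n+1) le_rfl)
        rwa [preT_comp, dcomp] at hmain
      exact step.trans (ih (fun m hm => hdets m (hm.trans (Nat.le_succ n))) a ha')

lemma det_prod (hk : IsKernel k) (xs : ℕ → 𝒳) (f : ℕ → ℝ) :
    ∀ n : ℕ, (∀ i < n, 0 < f i) →
    (gramMat k (preT xs n) + Matrix.diagonal (fun i : Fin n => f i.val ^ 2)).det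
      = ∏ t ∈ Finset.range n,
          (f t ^ 2 + postVar k (Matrix.diagonal fun i : Fin t => f i.val ^ 2)
              (preT xs t) (xs t)) := by
  intro n
  induction n with
  | zero => intro _; simp
  | succ n ih =>
    intro hf
    have hdetn : (gramMat k (preT xs n)
        + Matrix.diagonal (fun i : Fin n => f i.val ^ 2)).det ≠ 0 :=
      (MVRAux2.posDef_diag_add hk _
        (fun i => pow_pos (hf i.val (Nat.lt_succ_of_lt i.2)) 2)).det_pos.ne'
    have hstep := MVRAux2.det_step hk (preT xs (n+1)) (fun i : Fin (n+1) => f i.val ^ 2)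
      (by rw [preT_comp, dcomp]; exact hdetn)
    rw [preT_comp, dcomp] at hstep
    rw [hstep, ih (fun i hi => hf i (Nat.lt_succ_of_lt hi)), Finset.prod_range_succ]
    have h1 : preT xs (n+1) (Fin.last n) = xs n := by simp [preT]
    rw [h1]
    simp [Fin.val_last]

end MVRAux3

/-- posterior variance upper bound for MVR with non-stationary noise levels. -/
theorem mvr_posterior_variance_bound_nonstationary
    {𝒳 : Type u} (k : 𝒳 → 𝒳 → ℝ) (hk : IsKernel k)
    (T : ℕ) (hT : 0 < T)
    (lam lamTil : ℕ → ℝ)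
    (hlam : ∀ t < T, 0 ≤ lam t) (hlamTil : ∀ t < T, 0 < lamTil t)
    (hle : ∀ t < T, lam t ≤ lamTil t)
    (Xtil : Set 𝒳) (hXtil : Xtil.Nonempty)
    (xs : ℕ → 𝒳) (hmem : ∀ t < T, xs t ∈ Xtil)
    (hinv : ∀ t ≤ T,
      (gramMat k (preT xs t) + Matrix.diagonal (fun i : Fin t => lam i.val ^ 2)).det ≠ 0)
    (hMVR : ∀ t < T, ∀ x ∈ Xtil,
      postStd k (Matrix.diagonal fun i : Fin t => lam i.val ^ 2) (preT xs t) x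
        ≤ postStd k (Matrix.diagonal fun i : Fin t => lam i.val ^ 2) (preT xs t) (xs t))
    (γ : ℝ) (hγ : 0 ≤ γ)
    (hIG : ∀ Z : Fin T → 𝒳,
      infoGain k (Matrix.diagonal fun i : Fin T => lamTil i.val ^ 2) Z ≤ γ)
    (hbig : (T : ℝ) / 2 ≥ 4 * γ) :
    ∀ x ∈ Xtil,
      postStd k (Matrix.diagonal fun i : Fin T => lam i.val ^ 2) (preT xs T) x
        ≤ (4 / (T : ℝ)) * Real.sqrt ((∑ t ∈ Finset.range T, lamTil t ^ 2) * γ) := by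
  -- main proof
  intro x hx
  have hdetTil : ∀ n ≤ T, (gramMat k (preT xs n)
      + Matrix.diagonal (fun i : Fin n => lamTil i.val ^ 2)).det ≠ 0 := by
    intro n hn
    exact (MVRAux2.posDef_diag_add hk _
      (fun i => pow_pos (hlamTil i.val (lt_of_lt_of_le i.2 hn)) 2)).det_pos.ne'
  have hPSDlam : ∀ n, (Matrix.diagonal (fun i : Fin n => lam i.val ^ 2)).PosSemidef :=
    fun n => Matrix.posSemidef_diagonal_iff.2 fun i => sq_nonneg _
  have hPSDtil : ∀ n, (Matrix.diagonal (fun i : Fin n => lamTil i.val ^ 2)).PosSemidef :=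
    fun n => Matrix.posSemidef_diagonal_iff.2 fun i => sq_nonneg _
  set sig : ℕ → ℝ := fun t =>
    postVar k (Matrix.diagonal fun i : Fin t => lamTil i.val ^ 2) (preT xs t) (xs t)
    with hsigdef
  have hsig_nonneg : ∀ t ≤ T, 0 ≤ sig t := fun t ht =>
    MVRAux2.postVar_nonneg hk (hPSDtil t) (hdetTil t ht)
  set u : ℕ → ℝ := fun t => sig t / lamTil t ^ 2 with hudef
  have hu_nonneg : ∀ t < T, 0 ≤ u t := fun t ht =>
    div_nonneg (hsig_nonneg t ht.le) (sq_nonneg _)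
  -- info gain identity
  have hdetEq := MVRAux3.det_prod hk xs lamTil T (fun i hi => hlamTil i hi)
  have hIGT := hIG (preT xs T)
  have hfacpos : ∀ t ∈ Finset.range T, 0 < lamTil t ^ 2 + sig t := by
    intro t ht
    have := hsig_nonneg t (Finset.mem_range.mp ht).le
    have := pow_pos (hlamTil t (Finset.mem_range.mp ht)) 2
    linarith
  have hsum : ∑ t ∈ Finset.range T, Real.log (1 + u t) ≤ 2 * γ := by
    have hSd : (Matrix.diagonal (fun i : Fin T => lamTil i.val ^ 2)).det
        = ∏ t ∈ Finset.range T, lamTil t ^ 2 := by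
      rw [Matrix.det_diagonal]
      exact Fin.prod_univ_eq_prod_range (fun t => lamTil t ^ 2) T
    have hlogeq : Real.log (((Matrix.diagonal fun i : Fin T => lamTil i.val ^ 2)
          + gramMat k (preT xs T)).det
          / (Matrix.diagonal fun i : Fin T => lamTil i.val ^ 2).det)
        = ∑ t ∈ Finset.range T, Real.log (1 + u t) := by
      rw [add_comm, hdetEq, hSd, ← Finset.prod_div_distrib, Real.log_prod]
      · refine Finset.sum_congr rfl fun t ht => ?_
        congr 1
        have h2 : (lamTil t ^ 2 : ℝ) ≠ 0 :=
          (pow_pos (hlamTil t (Finset.mem_range.mp ht)) 2).ne'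
        simp only [hudef, hsigdef]
        rw [add_div, div_self h2]
      · intro t ht
        have h2 : (0:ℝ) < lamTil t ^ 2 := pow_pos (hlamTil t (Finset.mem_range.mp ht)) 2
        exact (div_pos (hfacpos t ht) h2).ne'
    unfold infoGain at hIGT
    rw [hlogeq] at hIGT
    linarith
  -- pointwise chain
  set v : ℝ := postVar k (Matrix.diagonal fun i : Fin T => lam i.val ^ 2) (preT xs T) x
    with hvdef
  have hv0 : 0 ≤ v := MVRAux2.postVar_nonneg hk (hPSDlam T) (hinv T le_rfl)
  have hchain : ∀ t < T, v ≤ sig t := by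
    intro t ht
    have step1 : v ≤ postVar k (Matrix.diagonal fun i : Fin t => lam i.val ^ 2)
        (preT xs t) x :=
      MVRAux3.postVar_preT_anti hk xs lam x T hinv t ht.le
    have h1 : 0 ≤ postVar k (Matrix.diagonal fun i : Fin t => lam i.val ^ 2)
        (preT xs t) x := MVRAux2.postVar_nonneg hk (hPSDlam t) (hinv t ht.le)
    have h2 : 0 ≤ postVar k (Matrix.diagonal fun i : Fin t => lam i.val ^ 2)
        (preT xs t) (xs t) := MVRAux2.postVar_nonneg hk (hPSDlam t) (hinv t ht.le)
    have hstd : Real.sqrt (postVar k (Matrix.diagonal fun i : Fin t => lam i.val ^ 2)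
          (preT xs t) x)
        ≤ Real.sqrt (postVar k (Matrix.diagonal fun i : Fin t => lam i.val ^ 2)
          (preT xs t) (xs t)) := hMVR t ht x hx
    have step2 : postVar k (Matrix.diagonal fun i : Fin t => lam i.val ^ 2)
          (preT xs t) x
        ≤ postVar k (Matrix.diagonal fun i : Fin t => lam i.val ^ 2)
          (preT xs t) (xs t) := by
      have := pow_le_pow_left₀ (Real.sqrt_nonneg _) hstd 2
      rwa [Real.sq_sqrt h1, Real.sq_sqrt h2] at this
    have step3 : postVar k (Matrix.diagonal fun i : Fin t => lam i.val ^ 2)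
          (preT xs t) (xs t) ≤ sig t := by
      refine MVRAux2.postVar_noise_mono hk _ _
        (fun i => sq_nonneg _) (fun i => ?_) (hinv t ht.le) (hdetTil t ht.le)
      exact pow_le_pow_left₀ (hlam i.val (lt_of_lt_of_le i.2 ht.le))
        (hle i.val (lt_of_lt_of_le i.2 ht.le)) 2
    exact step1.trans (step2.trans step3)
  -- arithmetic endgame
  have hTpos : (0:ℝ) < T := Nat.cast_pos.mpr hT
  have hSnn : (0:ℝ) ≤ ∑ t ∈ Finset.range T, lamTil t ^ 2 :=
    Finset.sum_nonneg fun t _ => sq_nonneg _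
  have hRHSnn : 0 ≤ (4 / (T : ℝ)) * Real.sqrt ((∑ t ∈ Finset.range T, lamTil t ^ 2) * γ) := by
    positivity
  show Real.sqrt v ≤ _
  rcases le_or_gt v 0 with hv | hv
  · have : v = 0 := le_antisymm hv hv0
    rw [this, Real.sqrt_zero]
    exact hRHSnn
  · classical
    set A := (Finset.range T).filter (fun t => 1 ≤ u t) with hAdef
    set B := (Finset.range T).filter (fun t => ¬ 1 ≤ u t) with hBdef
    have hcard : A.card + B.card = T := by
      rw [hAdef, hBdef, Finset.card_filter_add_card_filter_not, Finset.card_range]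
    have hlog_nonneg : ∀ t ∈ Finset.range T, 0 ≤ Real.log (1 + u t) := by
      intro t ht
      exact Real.log_nonneg (by linarith [hu_nonneg t (Finset.mem_range.mp ht)])
    have hAbound : (A.card : ℝ) * Real.log 2 ≤ 2 * γ := by
      have h1 : ∀ t ∈ A, Real.log 2 ≤ Real.log (1 + u t) := by
        intro t ht
        rcases Finset.mem_filter.mp ht with ⟨_, h2⟩
        exact Real.log_le_log two_pos (by linarith)
      have h2 := Finset.card_nsmul_le_sum A (fun t => Real.log (1 + u t)) (Real.log 2) h1
      rw [nsmul_eq_mul] at h2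
      have h3 : ∑ t ∈ A, Real.log (1 + u t) ≤ ∑ t ∈ Finset.range T, Real.log (1 + u t) :=
        Finset.sum_le_sum_of_subset_of_nonneg (Finset.filter_subset _ _)
          (fun t ht _ => hlog_nonneg t ht)
      linarith
    have hub : ∀ t ∈ B, v / lamTil t ^ 2 ≤ 2 * Real.log (1 + u t) := by
      intro t ht
      rcases Finset.mem_filter.mp ht with ⟨htr, h2⟩
      have htT := Finset.mem_range.mp htr
      have hu0 := hu_nonneg t htT
      have hu1 : u t < 1 := lt_of_not_ge h2
      have hl2 : (0:ℝ) < lamTil t ^ 2 := pow_pos (hlamTil t htT) 2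
      have hvle : v / lamTil t ^ 2 ≤ u t := by
        rw [div_le_iff₀ hl2, hudef]
        have := hchain t htT
        calc v ≤ sig t := this
          _ = sig t / lamTil t ^ 2 * lamTil t ^ 2 := (div_mul_cancel₀ _ hl2.ne').symm
      have hpos : (0:ℝ) < 1 + u t := by linarith
      have hlog2 : u t ≤ 2 * Real.log (1 + u t) := by
        have hl := Real.log_le_sub_one_of_pos (show (0:ℝ) < (1 + u t)⁻¹ by positivity)
        rw [Real.log_inv] at hl
        have h3 : 1 - (1 + u t)⁻¹ = u t / (1 + u t) := by field_simp; ring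
        have h4 : u t / (1 + u t) ≤ Real.log (1 + u t) := by linarith
        have h5 : u t / 2 ≤ u t / (1 + u t) := by
          apply div_le_div_of_nonneg_left hu0 hpos (by linarith)
        linarith
      linarith
    have hBsum : ∑ t ∈ B, v / lamTil t ^ 2 ≤ 4 * γ := by
      have h1 : ∑ t ∈ B, v / lamTil t ^ 2 ≤ ∑ t ∈ B, 2 * Real.log (1 + u t) :=
        Finset.sum_le_sum hub
      have h2 : ∑ t ∈ B, Real.log (1 + u t) ≤ ∑ t ∈ Finset.range T, Real.log (1 + u t) :=
        Finset.sum_le_sum_of_subset_of_nonneg (Finset.filter_subset _ _)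
          (fun t ht _ => hlog_nonneg t ht)
      rw [← Finset.mul_sum] at h1
      linarith
    -- Cauchy-Schwarz
    have hcs := Finset.sum_mul_sq_le_sq_mul_sq B (fun t => lamTil t)
      (fun t => Real.sqrt v / lamTil t)
    have hfg : ∀ t ∈ B, lamTil t * (Real.sqrt v / lamTil t) = Real.sqrt v := by
      intro t ht
      have htT := Finset.mem_range.mp (Finset.mem_filter.mp ht).1
      field_simp [(hlamTil t htT).ne']
    have hg2 : ∀ t ∈ B, (Real.sqrt v / lamTil t) ^ 2 = v / lamTil t ^ 2 := by
      intro t ht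
      rw [div_pow, Real.sq_sqrt hv.le]
    rw [Finset.sum_congr rfl hfg] at hcs
    rw [Finset.sum_congr rfl hg2] at hcs
    rw [Finset.sum_const, nsmul_eq_mul] at hcs
    have hcs2 : ((B.card : ℝ)) ^ 2 * v ≤ (∑ t ∈ B, lamTil t ^ 2) * (4 * γ) := by
      have h1 : ((B.card : ℝ) * Real.sqrt v) ^ 2 = (B.card : ℝ) ^ 2 * v := by
        rw [mul_pow, Real.sq_sqrt hv.le]
      have h2 : (∑ t ∈ B, lamTil t ^ 2) * (∑ t ∈ B, v / lamTil t ^ 2)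
          ≤ (∑ t ∈ B, lamTil t ^ 2) * (4 * γ) := by
        apply mul_le_mul_of_nonneg_left hBsum
        exact Finset.sum_nonneg fun t _ => sq_nonneg _
      calc ((B.card : ℝ)) ^ 2 * v = ((B.card : ℝ) * Real.sqrt v) ^ 2 := h1.symm
        _ ≤ (∑ t ∈ B, lamTil t ^ 2) * (∑ t ∈ B, v / lamTil t ^ 2) := hcs
        _ ≤ (∑ t ∈ B, lamTil t ^ 2) * (4 * γ) := h2
    have hSB : ∑ t ∈ B, lamTil t ^ 2 ≤ ∑ t ∈ Finset.range T, lamTil t ^ 2 :=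
      Finset.sum_le_sum_of_subset_of_nonneg (Finset.filter_subset _ _)
        (fun t _ _ => sq_nonneg _)
    have hcs3 : ((B.card : ℝ)) ^ 2 * v
        ≤ (∑ t ∈ Finset.range T, lamTil t ^ 2) * (4 * γ) := by
      refine hcs2.trans (mul_le_mul_of_nonneg_right hSB (by linarith))
    -- card B ≥ T/2
    have hlog2half : (1:ℝ)/2 ≤ Real.log 2 := by
      have := Real.log_two_gt_d9
      linarith
    have hcardA : (A.card : ℝ) ≤ (T : ℝ) / 2 := by
      nlinarith [hAbound, hbig, Nat.cast_nonneg (α := ℝ) A.card]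
    have hcardB : (T : ℝ) / 2 ≤ (B.card : ℝ) := by
      have : (A.card : ℝ) + (B.card : ℝ) = (T : ℝ) := by
        exact_mod_cast congrArg (Nat.cast : ℕ → ℝ) hcard
      linarith
    have hvineq : v ≤ 16 * ((∑ t ∈ Finset.range T, lamTil t ^ 2) * γ) / (T : ℝ) ^ 2 := by
      rw [le_div_iff₀ (by positivity)]
      have h6 : ((T:ℝ)/2)^2 * v ≤ ((B.card : ℝ))^2 * v :=
        mul_le_mul_of_nonneg_right (pow_le_pow_left₀ (by positivity) hcardB 2) hv.le
      have h7 : ((T:ℝ)/2)^2 * v = v * (T:ℝ)^2 / 4 := by ring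
      linarith
    have hfin : v ≤ ((4 / (T : ℝ)) * Real.sqrt ((∑ t ∈ Finset.range T, lamTil t ^ 2) * γ)) ^ 2 := by
      rw [mul_pow, div_pow, Real.sq_sqrt (mul_nonneg hSnn hγ)]
      calc v ≤ 16 * ((∑ t ∈ Finset.range T, lamTil t ^ 2) * γ) / (T : ℝ) ^ 2 := hvineq
        _ = 4 ^ 2 / (T : ℝ) ^ 2 * ((∑ t ∈ Finset.range T, lamTil t ^ 2) * γ) := by ring
    calc Real.sqrt v
        ≤ Real.sqrt (((4 / (T : ℝ)) * Real.sqrt ((∑ t ∈ Finset.range T, lamTil t ^ 2) * γ)) ^ 2) :=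
          Real.sqrt_le_sqrt hfin
      _ = (4 / (T : ℝ)) * Real.sqrt ((∑ t ∈ Finset.range T, lamTil t ^ 2) * γ) :=
          Real.sqrt_sq hRHSnn
end
end

section
/- (Monotone property of the information gain.) Let K be a real T×T positive semidefinite matrix and Σ = diag(λ_1²,…,λ_T²) a diagonal matrix whose entries satisfy λ_t² ≥ λ̲² for all t, where λ̲ > 0. Then ln( det(Σ + K) / det(Σ) ) ≤ ln( det(λ̲²·I_T + K) / det(λ̲²·I_T) ). -/
open Matrix Real Finset

noncomputable section

universe u

open scoped MatrixOrder

lemma one_le_det_one_add {n : ℕ} {W : Matrix (Fin n) (Fin n) ℝ} (hW : W.PosSemidef) :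
    1 ≤ (1 + W).det := by
  have hH := hW.isHermitian
  have hspec := hH.spectral_theorem
  set U : Matrix (Fin n) (Fin n) ℝ := (hH.eigenvectorUnitary : Matrix (Fin n) (Fin n) ℝ) with hU
  have hUU : U * star U = 1 := (Matrix.mem_unitaryGroup_iff).mp hH.eigenvectorUnitary.2
  have h1 : (1 : Matrix (Fin n) (Fin n) ℝ) + W
      = U * (1 + Matrix.diagonal (RCLike.ofReal ∘ hH.eigenvalues)) * star U := by
    rw [Matrix.mul_add, Matrix.mul_one, Matrix.add_mul, hUU]
    congr 1
  have hUU' : star U * U = 1 := Matrix.mem_unitaryGroup_iff'.mp hH.eigenvectorUnitary.2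
  rw [h1, Matrix.det_mul, Matrix.det_mul, mul_comm, ← mul_assoc, ← Matrix.det_mul, hUU',
    Matrix.det_one, one_mul]
  have h2 : (1 : Matrix (Fin n) (Fin n) ℝ) + Matrix.diagonal (RCLike.ofReal ∘ hH.eigenvalues)
      = Matrix.diagonal (fun i => 1 + hH.eigenvalues i) := by
    rw [← Matrix.diagonal_one, Matrix.diagonal_add]
    rfl
  rw [h2, Matrix.det_diagonal]
  calc (1:ℝ) = ∏ _i : Fin n, 1 := by simp
    _ ≤ ∏ i, (1 + hH.eigenvalues i) := by
        refine Finset.prod_le_prod (fun i _ => zero_le_one) (fun i _ => ?_)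
        linarith [hW.eigenvalues_nonneg i]

lemma det_one_add_le_of_psd_le {n : ℕ} {A B : Matrix (Fin n) (Fin n) ℝ}
    (hA : A.PosSemidef) (hBA : (B - A).PosSemidef) :
    (1 + A).det ≤ (1 + B).det := by
  have hQd : (1 + A).PosDef := Matrix.PosDef.add_posSemidef Matrix.PosDef.one hA
  have hQ : (1 + A).PosSemidef := hQd.posSemidef
  set R := CFC.sqrt (1 + A) with hRdef
  have hR : R.PosSemidef := (CFC.sqrt_nonneg (1 + A)).posSemidef
  have hRR : R * R = 1 + A := CFC.sqrt_mul_sqrt_self _ hQ.nonneg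
  have hdetQ : 0 < (1 + A).det := hQd.det_pos
  have hdetR : R.det * R.det = (1 + A).det := by rw [← Matrix.det_mul, hRR]
  have hRne : R.det ≠ 0 := by
    intro h; rw [h, mul_zero] at hdetR; exact hdetQ.ne' hdetR.symm
  have hu : IsUnit R.det := isUnit_iff_ne_zero.mpr hRne
  have hRinv : R * R⁻¹ = 1 := Matrix.mul_nonsing_inv R hu
  have hRinv' : R⁻¹ * R = 1 := Matrix.nonsing_inv_mul R hu
  have hmid : R * (R⁻¹ * (B - A) * R⁻¹) * R = B - A := by
    rw [Matrix.mul_assoc R⁻¹ (B - A) R⁻¹, ← Matrix.mul_assoc R R⁻¹, hRinv, Matrix.one_mul,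
      Matrix.mul_assoc, hRinv', Matrix.mul_one]
  have key : 1 + B = R * (1 + R⁻¹ * (B - A) * R⁻¹) * R := by
    rw [Matrix.mul_add, Matrix.mul_one, Matrix.add_mul, hRR, hmid]
    abel
  have hW : (R⁻¹ * (B - A) * R⁻¹).PosSemidef := by
    have hinvH : R⁻¹ᴴ = R⁻¹ := by
      rw [Matrix.conjTranspose_nonsing_inv, hR.isHermitian.eq]
    have := hBA.mul_mul_conjTranspose_same R⁻¹
    rwa [hinvH] at this
  have h1 : 1 ≤ (1 + R⁻¹ * (B - A) * R⁻¹).det := one_le_det_one_add hW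
  calc (1 + A).det = R.det * R.det * 1 := by rw [hdetR, mul_one]
    _ ≤ R.det * R.det * (1 + R⁻¹ * (B - A) * R⁻¹).det := by
        apply mul_le_mul_of_nonneg_left h1
        rw [hdetR]; exact hdetQ.le
    _ = (1 + B).det := by
        rw [key, Matrix.det_mul, Matrix.det_mul]; ring

lemma ratio_eq_det {T : ℕ} (K S : Matrix (Fin T) (Fin T) ℝ) (hSS : S * S = K)
    (d : Fin T → ℝ) (hd : ∀ t, 0 < d t) :
    (Matrix.diagonal (fun t => d t ^ 2) + K).det / (Matrix.diagonal (fun t => d t ^ 2)).det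
      = (1 + S * Matrix.diagonal (fun t => (d t ^ 2)⁻¹) * S).det := by
  set D : Matrix (Fin T) (Fin T) ℝ := Matrix.diagonal (fun t => (d t)⁻¹) with hDdef
  have hdne : ∀ t, d t ≠ 0 := fun t => (hd t).ne'
  have hDD : D * D = Matrix.diagonal (fun t => (d t ^ 2)⁻¹) := by
    rw [hDdef, Matrix.diagonal_mul_diagonal]
    have : (fun t => (d t)⁻¹ * (d t)⁻¹) = fun t => (d t ^ 2)⁻¹ := by
      funext t; rw [sq, mul_inv]
    rw [this]
  have hDSigD : D * Matrix.diagonal (fun t => d t ^ 2) * D = 1 := by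
    rw [hDdef, Matrix.diagonal_mul_diagonal, Matrix.diagonal_mul_diagonal, ← Matrix.diagonal_one]
    have : (fun t => (d t)⁻¹ * d t ^ 2 * (d t)⁻¹) = fun _ => (1:ℝ) := by
      funext t
      rw [sq]
      field_simp [hdne t]
    rw [this]
  have hcomm : (1 + S * Matrix.diagonal (fun t => (d t ^ 2)⁻¹) * S).det
      = (1 + D * K * D).det := by
    rw [← hDD, ← hSS]
    have e1 : S * (D * D) * S = (S * D) * (D * S) := by
      rw [Matrix.mul_assoc, Matrix.mul_assoc, Matrix.mul_assoc]
    have e2 : D * (S * S) * D = (D * S) * (S * D) := by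
      rw [Matrix.mul_assoc, Matrix.mul_assoc, Matrix.mul_assoc]
    rw [e1, e2, Matrix.det_one_add_mul_comm]
  have hexp : D * (Matrix.diagonal (fun t => d t ^ 2) + K) * D = 1 + D * K * D := by
    rw [Matrix.mul_add, Matrix.add_mul, hDSigD]
  have hdet1 : (1 + D * K * D).det
      = D.det * (Matrix.diagonal (fun t => d t ^ 2) + K).det * D.det := by
    rw [← hexp, Matrix.det_mul, Matrix.det_mul]
  have hdetSig : (Matrix.diagonal (fun t => d t ^ 2)).det = ∏ t, d t ^ 2 := by
    rw [Matrix.det_diagonal]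
  have hdetD : D.det = ∏ t, (d t)⁻¹ := by rw [hDdef, Matrix.det_diagonal]
  have hprod : D.det * (Matrix.diagonal (fun t => d t ^ 2)).det * D.det = 1 := by
    rw [hdetD, hdetSig, ← Finset.prod_mul_distrib, ← Finset.prod_mul_distrib]
    rw [Finset.prod_eq_one]
    intro t _
    rw [sq]
    field_simp [hdne t]
  have hSigne : (Matrix.diagonal (fun t => d t ^ 2)).det ≠ 0 := by
    intro h; rw [h, mul_zero, zero_mul] at hprod; exact one_ne_zero hprod.symm
  rw [hcomm, hdet1, div_eq_iff hSigne]
  linear_combination -(Matrix.diagonal (fun t => d t ^ 2) + K).det * hprod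

/-- monotone property of the information gain. -/
theorem infoGain_monotone_in_noise
    (T : ℕ) (K : Matrix (Fin T) (Fin T) ℝ) (hK : K.PosSemidef)
    (lam : Fin T → ℝ) (lmin : ℝ) (hlmin : 0 < lmin)
    (hge : ∀ t, lmin ^ 2 ≤ lam t ^ 2) :
    Real.log ((Matrix.diagonal (fun t : Fin T => lam t ^ 2) + K).det
        / (Matrix.diagonal (fun t : Fin T => lam t ^ 2)).det)
      ≤ Real.log (((lmin ^ 2) • (1 : Matrix (Fin T) (Fin T) ℝ) + K).det
        / ((lmin ^ 2) • (1 : Matrix (Fin T) (Fin T) ℝ)).det) := by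
  have hc0 : (0:ℝ) < lmin ^ 2 := pow_pos hlmin 2
  set S := CFC.sqrt K with hSdef
  have hSS : S * S = K := CFC.sqrt_mul_sqrt_self _ hK.nonneg
  have hSH : Sᴴ = S := (CFC.sqrt_nonneg K).posSemidef.isHermitian.eq
  set d : Fin T → ℝ := fun t => Real.sqrt (lam t ^ 2) with hd
  have hd0 : ∀ t, 0 < d t := fun t => Real.sqrt_pos.mpr (lt_of_lt_of_le hc0 (hge t))
  have hdsq : ∀ t, d t ^ 2 = lam t ^ 2 := fun t => Real.sq_sqrt (sq_nonneg _)
  have hSig : (Matrix.diagonal (fun t : Fin T => lam t ^ 2))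
      = Matrix.diagonal (fun t => d t ^ 2) := by
    have : (fun t : Fin T => lam t ^ 2) = fun t => d t ^ 2 := by
      funext t; rw [hdsq]
    rw [this]
  have hCI : (lmin ^ 2) • (1 : Matrix (Fin T) (Fin T) ℝ)
      = Matrix.diagonal (fun _ : Fin T => (Real.sqrt (lmin ^ 2)) ^ 2) := by
    rw [Matrix.smul_one_eq_diagonal]
    congr 1; funext t; rw [Real.sq_sqrt hc0.le]
  have e1 := ratio_eq_det K S hSS d hd0
  have e2 := ratio_eq_det K S hSS (fun _ => Real.sqrt (lmin ^ 2))
    (fun _ => Real.sqrt_pos.mpr hc0)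
  rw [hSig, hCI, e1, e2]
  -- the two inner PSD matrices
  set dM : Fin T → ℝ := fun t => (d t ^ 2)⁻¹ with hdM
  set dN : Fin T → ℝ := fun _ : Fin T => ((Real.sqrt (lmin ^ 2)) ^ 2)⁻¹ with hdN
  have hMpsd : (S * Matrix.diagonal dM * S).PosSemidef := by
    have hdiag : (Matrix.diagonal dM).PosSemidef :=
      Matrix.PosSemidef.diagonal (fun t => inv_nonneg.mpr (sq_nonneg _))
    have := hdiag.mul_mul_conjTranspose_same S
    rwa [hSH] at this
  have hdiff : (S * Matrix.diagonal dN * S - S * Matrix.diagonal dM * S).PosSemidef := by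
    have hsub : S * Matrix.diagonal dN * S - S * Matrix.diagonal dM * S
        = S * Matrix.diagonal (fun t => dN t - dM t) * S := by
      rw [← Matrix.diagonal_sub, Matrix.mul_sub, Matrix.sub_mul]
    rw [hsub]
    have hdiag : (Matrix.diagonal (fun t => dN t - dM t)).PosSemidef := by
      refine Matrix.PosSemidef.diagonal (fun t => ?_)
      have h1 : (lam t ^ 2)⁻¹ ≤ (lmin ^ 2)⁻¹ := inv_anti₀ hc0 (hge t)
      simp only [hdN, hdM, Pi.zero_apply, Real.sq_sqrt hc0.le, hdsq t, sub_nonneg]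
      exact h1
    have := hdiag.mul_mul_conjTranspose_same S
    rwa [hSH] at this
  have hle : (1 + S * Matrix.diagonal dM * S).det ≤ (1 + S * Matrix.diagonal dN * S).det :=
    det_one_add_le_of_psd_le hMpsd hdiff
  have hpos : 0 < (1 + S * Matrix.diagonal dM * S).det :=
    (Matrix.PosDef.add_posSemidef Matrix.PosDef.one hMpsd).det_pos
  exact Real.log_le_log hpos hle
end
end
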